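/- Define T(n,s,i) as the number of s-element subsets γ = {γ₁ < ... < γ_s} of {1,...,n} with exactly i indices j satisfying γⱼ ≠ 2j. Then for i < s < ⌊n/2⌋, T(n,s,i) = T(n,s+1,i), and for s < ⌊n/2⌋, T(n,s,s) = T(n,s+1,s). -/

import Mathlib

/-- Number of marks not at home: indices `j` (0-indexed) with `γⱼ₊₁ ≠ 2(j+1)`. -/
def natCount (γ : Finset ℕ) : ℕ :=
  ((Finset.range γ.card).filter fun j => (γ.sort (· ≤ ·)).getD j 0 ≠ 2 * (j + 1)).card

/-- `T n s i` counts the `s`-element subsets of `{1,…,n}` with exactly `i` marks not at home. -/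
def T (n s i : ℕ) : ℕ :=
  (((Finset.Icc 1 n).powersetCard s).filter fun γ => natCount γ = i).card

def f : ℕ → ℕ → ℕ → ℕ
  | 0, s, i => if s = 0 ∧ i = 0 then 1 else 0
  | n+1, s, i =>
    f n s i +
      (if s = 0 then 0
       else if n + 1 = 2 * s then f n (s-1) i
       else if i = 0 then 0 else f n (s-1) (i-1))

lemma f_succ (n s i : ℕ) :
    f (n+1) s i = f n s i +
      (if s = 0 then 0
       else if n + 1 = 2 * s then f n (s-1) i
       else if i = 0 then 0 else f n (s-1) (i-1)) := rfl

lemma f_zero_of_lt : ∀ n s i, s < i → f n s i = 0 := by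
  intro n
  induction n with
  | zero => intro s i h; simp only [f]; rw [if_neg (by omega)]
  | succ n ih =>
    intro s i h
    rw [f_succ, ih s i h]
    rcases s with _ | s'
    · simp
    · rw [if_neg (by omega)]
      simp only [Nat.add_sub_cancel]
      split
      · rw [ih s' i (by omega)]
      · rcases i with _ | i'
        · omega
        · rw [if_neg (by omega)]
          simp only [Nat.add_sub_cancel]
          rw [ih s' i' (by omega)]

lemma f_zero_of_gt : ∀ n s i, n < s → f n s i = 0 := by
  intro n
  induction n with
  | zero => intro s i h; simp only [f]; rw [if_neg (by omega)]
  | succ n ih =>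
    intro s i h
    rw [f_succ, ih s i (by omega)]
    rcases s with _ | s'
    · omega
    · rw [if_neg (by omega)]
      simp only [Nat.add_sub_cancel]
      split
      · rw [ih s' i (by omega)]
      · split
        · rfl
        · rw [ih s' (i-1) (by omega)]

lemma f_zero_of_big : ∀ n s i, n + i < 2 * s → f n s i = 0 := by
  intro n
  induction n with
  | zero => intro s i h; simp only [f]; rw [if_neg (by omega)]
  | succ n ih =>
    intro s i h
    rw [f_succ, ih s i (by omega)]
    rcases s with _ | s'
    · omega
    · rw [if_neg (by omega), if_neg (by omega)]
      simp only [Nat.add_sub_cancel]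
      rcases i with _ | i'
      · simp
      · rw [if_neg (by omega)]
        simp only [Nat.add_sub_cancel]
        rw [ih s' i' (by omega)]

lemma f_shift : ∀ n s i, i ≤ s → s ≤ n → 2 * s ≤ n + i →
    f n s i = f n (i - (2 * s - n)) (i - (2 * s - n)) := by
  intro n
  induction n with
  | zero =>
    intro s i h1 h2 _
    have hs : s = 0 := by omega
    have hi : i = 0 := by omega
    subst hs; subst hi; rfl
  | succ n ih =>
    intro s i h1 h2 h3
    rcases s with _ | s'
    · have hi : i = 0 := by omega
      subst hi; simp
    · set s := s' + 1 with hsdef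
      rcases Nat.lt_or_ge n (2 * s) with hbig | hsmall
      · rcases Nat.eq_or_lt_of_le hbig with heq | hlt
        · -- Case B : 2*s = n+1 (heq : n < 2*s used as n+1 = 2*s), k = i
          have heq' : n + 1 = 2 * s := by omega
          have hk : i - (2 * s - (n+1)) = i := by omega
          rw [hk]
          rcases Nat.eq_or_lt_of_le h1 with hieq | hilt
          · rw [hieq]
          · -- i < s, so i ≤ s'
            have e2 : f n s' i = f n i i := by
              have := ih s' i (by omega) (by omega) (by omega)
              rwa [show i - (2 * s' - n) = i by omega] at this
            rcases Nat.eq_zero_or_pos i with hi0 | hip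
            · subst hi0
              rw [f_succ, if_neg (by omega), if_pos heq',
                show s - 1 = s' from rfl, f_zero_of_big n s 0 (by omega), e2]
              simp [f_succ]
            · have e1 : f n s i = f n (i-1) (i-1) := by
                have := ih s i h1 (by omega) (by omega)
                rwa [show i - (2 * s - n) = i - 1 by omega] at this
              rw [f_succ, if_neg (by omega), if_pos heq',
                show s - 1 = s' from rfl, e1, e2,
                f_succ, if_neg (by omega), if_neg (by omega), if_neg (by omega)]
              ring
        · -- Case C : 2*s ≥ n+2, k = i - (2*s - n - 1), i ≥ 1
          have hi1 : 1 ≤ i := by omega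
          set k := i - (2 * s - (n+1)) with hkdef
          have hkle : 2 * k < n + 1 := by omega
          rw [f_succ, if_neg (by omega), if_neg (by omega), if_neg (by omega),
            show s - 1 = s' from rfl]
          have e2 : f n s' (i-1) = f n k k := by
            have := ih s' (i-1) (by omega) (by omega) (by omega)
            rwa [show (i-1) - (2 * s' - n) = k by omega] at this
          rcases Nat.lt_or_ge (n + i) (2 * s) with hz | hnz
          · have hk0 : k = 0 := by omega
            rw [f_zero_of_big n s i hz, e2, hk0]
            simp [f_succ]
          · have hk1 : 1 ≤ k := by omega
            have e1 : f n s i = f n (k-1) (k-1) := by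
              have := ih s i h1 (by omega) hnz
              rwa [show i - (2 * s - n) = k - 1 by omega] at this
            rw [e1, e2, f_succ, if_neg (by omega), if_neg (by omega),
              if_neg (by omega)]
            ring
      · -- Case A : 2*s ≤ n, k = i
        have hk : i - (2 * s - (n+1)) = i := by omega
        rw [hk, f_succ, if_neg (by omega), if_neg (by omega),
          show s - 1 = s' from rfl]
        have e1 : f n s i = f n i i := by
          have := ih s i h1 (by omega) (by omega)
          rwa [show i - (2 * s - n) = i by omega] at this
        rcases Nat.eq_zero_or_pos i with hi0 | hip
        · subst hi0
          rw [if_pos rfl, e1]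
          simp [f_succ]
        · rw [if_neg (by omega)]
          have e2 : f n s' (i-1) = f n (i-1) (i-1) := by
            have := ih s' (i-1) (by omega) (by omega) (by omega)
            rwa [show (i-1) - (2 * s' - n) = i - 1 by omega] at this
          rw [e1, e2, f_succ, if_neg (by omega), if_neg (by omega),
            if_neg (by omega)]

lemma sort_insert_max (γ : Finset ℕ) (m : ℕ) (h : ∀ x ∈ γ, x < m) :
    (insert m γ).sort (· ≤ ·) = γ.sort (· ≤ ·) ++ [m] := by
  have hm : m ∉ γ := fun hmem => lt_irrefl m (h m hmem)
  refine (fun hp h1 h2 => List.Perm.eq_of_pairwise' (r := fun a b : ℕ => a ≤ b) h1 h2 hp) ?_ ?_ ?_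
  · exact ((Finset.sort_perm_toList _ _).trans (Finset.toList_insert hm)).trans
      (((List.Perm.cons m (Finset.sort_perm_toList _ _).symm)).trans
        (List.perm_append_singleton m _).symm)
  · exact Finset.pairwise_sort _ _
  · refine List.pairwise_append.2 ⟨Finset.pairwise_sort _ _, List.pairwise_singleton _ _, ?_⟩
    intro x hx y hy
    rw [List.mem_singleton] at hy
    subst hy
    exact le_of_lt (h x ((Finset.mem_sort _).1 hx))

lemma natCount_insert (γ : Finset ℕ) (m : ℕ) (h : ∀ x ∈ γ, x < m) :
    natCount (insert m γ) = natCount γ + (if m = 2 * (γ.card + 1) then 0 else 1) := by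
  have hm : m ∉ γ := fun hmem => lt_irrefl m (h m hmem)
  have hcard : (insert m γ).card = γ.card + 1 := Finset.card_insert_of_notMem hm
  have hlen : (γ.sort (· ≤ ·)).length = γ.card := Finset.length_sort _
  unfold natCount
  rw [hcard, sort_insert_max γ m h, Finset.range_add_one, Finset.filter_insert]
  have hfc : ∀ j ∈ Finset.range γ.card,
      (((γ.sort (· ≤ ·)) ++ [m]).getD j 0 ≠ 2 * (j + 1)) =
      ((γ.sort (· ≤ ·)).getD j 0 ≠ 2 * (j + 1)) := by
    intro j hj
    rw [List.getD_append _ _ _ _ (by rw [hlen]; exact Finset.mem_range.1 hj)]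
  rw [Finset.filter_congr (fun j hj => by rw [hfc j hj])]
  have hlast : ((γ.sort (· ≤ ·)) ++ [m]).getD γ.card 0 = m := by
    rw [List.getD_append_right _ _ _ _ (by omega), hlen]
    simp
  rw [hlast]
  by_cases hmeq : m = 2 * (γ.card + 1)
  · rw [if_neg (by simp [hmeq]), if_pos hmeq]
    omega
  · rw [if_pos hmeq, if_neg hmeq,
      Finset.card_insert_of_notMem (by simp)]

lemma Icc_succ (n : ℕ) : Finset.Icc 1 (n+1) = insert (n+1) (Finset.Icc 1 n) := by
  ext x
  simp only [Finset.mem_Icc, Finset.mem_insert]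
  omega

lemma T_succ (n s' i : ℕ) :
    T (n+1) (s'+1) i = T n (s'+1) i +
      (if n + 1 = 2 * (s'+1) then T n s' i
       else if i = 0 then 0 else T n s' (i-1)) := by
  have hnotmem : (n+1) ∉ Finset.Icc 1 n := by simp
  unfold T
  rw [Icc_succ, Finset.powersetCard_succ_insert hnotmem, Finset.filter_union]
  rw [Finset.card_union_of_disjoint]
  · congr 1
    rw [Finset.filter_image]
    rw [Finset.card_image_of_injOn]
    · -- the filtered set: γ ∈ powersetCard s' (Icc 1 n) with natCount (insert (n+1) γ) = i
      have key : ∀ γ ∈ (Finset.Icc 1 n).powersetCard s',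
          natCount (insert (n+1) γ) = natCount γ + (if n + 1 = 2 * (s'+1) then 0 else 1) := by
        intro γ hγ
        rw [Finset.mem_powersetCard] at hγ
        rw [natCount_insert γ (n+1) (fun x hx => by
          have := hγ.1 hx; rw [Finset.mem_Icc] at this; omega), hγ.2]
      by_cases hh : n + 1 = 2 * (s'+1)
      · rw [if_pos hh]
        congr 1
        apply Finset.filter_congr
        intro γ hγ
        rw [key γ hγ, if_pos hh, Nat.add_zero]
      · rw [if_neg hh]
        rcases i with _ | i'
        · rw [show ((Finset.Icc 1 n).powersetCard s').filter
              (fun γ => natCount (insert (n+1) γ) = 0) = ∅ from ?_]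
          · simp
          · apply Finset.filter_false_of_mem
            intro γ hγ
            rw [key γ hγ, if_neg hh]
            omega
        · simp only [Nat.add_sub_cancel]
          congr 1
          apply Finset.filter_congr
          intro γ hγ
          rw [key γ hγ, if_neg hh]
          constructor <;> intro hx <;> omega
    · -- injectivity of insert (n+1) on the filtered subsets of powersetCard
      intro a ha b hb hab
      simp only [Finset.coe_filter, Set.mem_setOf_eq, Finset.mem_powersetCard] at ha hb
      have hna : (n+1) ∉ a := fun hmem => by
        have := ha.1.1 hmem; rw [Finset.mem_Icc] at this; omega
      have hnb : (n+1) ∉ b := fun hmem => by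
        have := hb.1.1 hmem; rw [Finset.mem_Icc] at this; omega
      have := congrArg (Finset.erase · (n+1)) hab
      simpa [Finset.erase_insert hna, Finset.erase_insert hnb] using this
  · -- disjointness
    rw [Finset.disjoint_left]
    intro γ hγ hγ'
    rw [Finset.mem_filter, Finset.mem_powersetCard] at hγ
    rw [Finset.mem_filter, Finset.mem_image] at hγ'
    obtain ⟨δ, _, hδ2⟩ := hγ'.1
    have hmem : (n+1) ∈ γ := hδ2 ▸ Finset.mem_insert_self _ _
    have := hγ.1.1 hmem
    rw [Finset.mem_Icc] at this
    omega
  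
lemma T_zero_s (n i : ℕ) : T n 0 i = if i = 0 then 1 else 0 := by
  unfold T
  rw [Finset.powersetCard_zero]
  have : natCount ∅ = 0 := by simp [natCount]
  by_cases hi : i = 0
  · subst hi; rw [if_pos rfl]
    rw [Finset.filter_singleton, if_pos this]
    simp
  · rw [if_neg hi, Finset.filter_singleton, if_neg (by rw [this]; omega)]
    simp

lemma T_zero_n (s i : ℕ) : T 0 s i = f 0 s i := by
  rcases s with _ | s'
  · rw [T_zero_s]
    by_cases hi : i = 0
    · subst hi; simp [f]
    · rw [if_neg hi, f_zero_of_lt 0 0 i (by omega)]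
  · have h0 : Finset.Icc 1 0 = (∅ : Finset ℕ) := Finset.Icc_eq_empty (by omega)
    have : ((∅ : Finset ℕ).powersetCard (s'+1)) = ∅ := by
      ext γ
      simp only [Finset.mem_powersetCard, Finset.subset_empty, Finset.notMem_empty,
        iff_false, not_and]
      rintro rfl
      simp
    unfold T
    rw [h0, this]
    simp only [Finset.filter_empty, Finset.card_empty]
    rw [f_zero_of_gt 0 (s'+1) i (by omega)]

lemma T_eq_f : ∀ n s i, T n s i = f n s i := by
  intro n
  induction n with
  | zero => exact fun s i => T_zero_n s i
  | succ n ih =>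
    intro s i
    rcases s with _ | s'
    · rw [T_zero_s, f_succ, if_pos rfl, Nat.add_zero, ← ih, T_zero_s]
    · rw [T_succ, f_succ, if_neg (Nat.succ_ne_zero s')]
      simp only [Nat.add_sub_cancel, ih]

theorem stmt7 (n s i : ℕ) (hs : s < n / 2) :
    (i < s → T n s i = T n (s + 1) i) ∧ T n s s = T n (s + 1) s := by
  have hn : 2 * (s + 1) ≤ n := by omega
  have key : ∀ j, j ≤ s → T n s j = T n (s+1) j := by
    intro j hj
    rw [T_eq_f, T_eq_f,
      f_shift n s j hj (by omega) (by omega),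
      f_shift n (s+1) j (by omega) (by omega) (by omega)]
    congr 1 <;> omega
  exact ⟨fun h => key i h.le, key s le_rfl⟩
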